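/- arXiv:2209.13448 — 3 statements merged into one kernel-verified Lean document; each statement's English description precedes it below -/
import Mathlib

section
/- (Sewing Lemma, dyadic Cauchy estimate) Let E be a Banach space, A : {(s,t) : 0 ≤ s ≤ t ≤ T} → E with A(t,t) = 0, and suppose there are β > 1 and R ≥ 0 with ‖A(s,t) - A(s,u) - A(u,t)‖ ≤ R|t-s|^β for all s ≤ u ≤ t. For n ∈ ℕ let I^n(t) = Σ_{k=0}^{2^n - 1} A(t_k, t_{k+1}) with t_k = (k/2^n)·t. Then ‖I^n(t) - I^{n+1}(t)‖ ≤ R·t^β·2^{n(1-β)}; consequently (I^n(t))_n is a Cauchy sequence in E. -/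
/-- The dyadic Riemann-type sums of a germ `A` at level `n` on `[0,t]`. -/
noncomputable def dyadicSum {E : Type*} [NormedAddCommGroup E] [NormedSpace ℝ E]
    (A : ℝ → ℝ → E) (n : ℕ) (t : ℝ) : E :=
  ∑ k ∈ Finset.range (2 ^ n), A ((k : ℝ) / 2 ^ n * t) (((k : ℝ) + 1) / 2 ^ n * t)

lemma sum_range_two_mul' {M : Type*} [AddCommMonoid M] (f : ℕ → M) (n : ℕ) :
    ∑ j ∈ Finset.range (2 * n), f j
      = ∑ k ∈ Finset.range n, (f (2 * k) + f (2 * k + 1)) := by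
  induction n with
  | zero => simp
  | succ n ih =>
    rw [Nat.mul_succ, Finset.sum_range_succ, Finset.sum_range_succ, Finset.sum_range_succ, ih]
    abel

theorem sewing_dyadic_cauchy
    {E : Type*} [NormedAddCommGroup E] [NormedSpace ℝ E] [CompleteSpace E]
    (T : ℝ) (hT : 0 ≤ T) (A : ℝ → ℝ → E)
    (hdiag : ∀ t : ℝ, A t t = 0)
    (β R : ℝ) (hβ : 1 < β) (hR : 0 ≤ R)
    (hδ : ∀ s u t : ℝ, 0 ≤ s → s ≤ u → u ≤ t → t ≤ T →
      ‖A s t - A s u - A u t‖ ≤ R * (t - s) ^ β)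
    (t : ℝ) (ht : t ∈ Set.Icc 0 T) :
    (∀ n : ℕ, ‖dyadicSum A n t - dyadicSum A (n+1) t‖ ≤ R * t ^ β * 2 ^ ((n : ℝ) * (1 - β))) ∧
    CauchySeq (fun n => dyadicSum A n t) := by
  obtain ⟨ht0, htT⟩ := ht
  have key : ∀ n : ℕ, ‖dyadicSum A n t - dyadicSum A (n+1) t‖
      ≤ R * t ^ β * 2 ^ ((n : ℝ) * (1 - β)) := by
    intro n
    have h2n : (0 : ℝ) < 2 ^ n := by positivity
    have hsplit : dyadicSum A (n+1) t
        = ∑ k ∈ Finset.range (2 ^ n),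
            (A ((k : ℝ) / 2 ^ n * t) (((2 * k : ℝ) + 1) / 2 ^ (n+1) * t)
              + A (((2 * k : ℝ) + 1) / 2 ^ (n+1) * t) (((k : ℝ) + 1) / 2 ^ n * t)) := by
      unfold dyadicSum
      rw [show 2 ^ (n+1) = 2 * 2 ^ n from by ring, sum_range_two_mul']
      refine Finset.sum_congr rfl fun k _ => ?_
      push_cast
      congr 3 <;> · field_simp; ring
    have hdiff : dyadicSum A n t - dyadicSum A (n+1) t
        = ∑ k ∈ Finset.range (2 ^ n),
            (A ((k : ℝ) / 2 ^ n * t) (((k : ℝ) + 1) / 2 ^ n * t)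
              - A ((k : ℝ) / 2 ^ n * t) (((2 * k : ℝ) + 1) / 2 ^ (n+1) * t)
              - A (((2 * k : ℝ) + 1) / 2 ^ (n+1) * t) (((k : ℝ) + 1) / 2 ^ n * t)) := by
      rw [hsplit]
      unfold dyadicSum
      rw [← Finset.sum_sub_distrib]
      refine Finset.sum_congr rfl fun k _ => ?_
      abel
    have hbound : ∀ k ∈ Finset.range (2 ^ n),
        ‖A ((k : ℝ) / 2 ^ n * t) (((k : ℝ) + 1) / 2 ^ n * t)
          - A ((k : ℝ) / 2 ^ n * t) (((2 * k : ℝ) + 1) / 2 ^ (n+1) * t)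
          - A (((2 * k : ℝ) + 1) / 2 ^ (n+1) * t) (((k : ℝ) + 1) / 2 ^ n * t)‖
          ≤ R * (t / 2 ^ n) ^ β := by
      intro k hk
      rw [Finset.mem_range] at hk
      have hk' : (k : ℝ) + 1 ≤ 2 ^ n := by exact_mod_cast Nat.succ_le_of_lt hk
      have h1 : (0 : ℝ) ≤ (k : ℝ) / 2 ^ n * t := by positivity
      have h2 : (k : ℝ) / 2 ^ n * t ≤ ((2 * k : ℝ) + 1) / 2 ^ (n+1) * t := by
        apply mul_le_mul_of_nonneg_right _ ht0
        rw [div_le_div_iff₀ h2n (by positivity)]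
        push_cast; ring_nf; nlinarith [h2n]
      have h3 : ((2 * k : ℝ) + 1) / 2 ^ (n+1) * t ≤ ((k : ℝ) + 1) / 2 ^ n * t := by
        apply mul_le_mul_of_nonneg_right _ ht0
        rw [div_le_div_iff₀ (by positivity) h2n]
        push_cast; rw [pow_succ]; nlinarith [h2n]
      have h4 : ((k : ℝ) + 1) / 2 ^ n * t ≤ T := by
        calc ((k : ℝ) + 1) / 2 ^ n * t ≤ 1 * t := by
              apply mul_le_mul_of_nonneg_right _ ht0
              rw [div_le_one h2n]; exact hk'
          _ = t := one_mul t
          _ ≤ T := htT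
      have := hδ _ _ _ h1 h2 h3 h4
      convert this using 3
      field_simp
      ring
    calc ‖dyadicSum A n t - dyadicSum A (n+1) t‖
        ≤ ∑ k ∈ Finset.range (2 ^ n), (R * (t / 2 ^ n) ^ β) := by
          rw [hdiff]
          exact (norm_sum_le _ _).trans (Finset.sum_le_sum hbound)
      _ = 2 ^ n * (R * (t / 2 ^ n) ^ β) := by
          rw [Finset.sum_const, Finset.card_range]; simp [nsmul_eq_mul]
      _ = R * t ^ β * 2 ^ ((n : ℝ) * (1 - β)) := by
          rw [Real.div_rpow ht0 (le_of_lt h2n)]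
          rw [show ((n : ℝ) * (1 - β)) = (n : ℝ) + (n : ℝ) * (-β) by ring,
            Real.rpow_add two_pos, Real.rpow_natCast]
          rw [show ((n : ℝ) * (-β)) = -((n:ℝ) * β) by ring, Real.rpow_neg (by norm_num),
            ← Real.rpow_natCast (2:ℝ) n, ← Real.rpow_mul (by norm_num)]
          have hpos : (0:ℝ) < (2:ℝ) ^ ((n:ℝ) * β) := Real.rpow_pos_of_pos two_pos _
          rw [Real.rpow_natCast]
          field_simp
  refine ⟨key, ?_⟩
  have hr1 : (2 : ℝ) ^ (1 - β) < 1 :=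
    Real.rpow_lt_one_of_one_lt_of_neg one_lt_two (by linarith)
  apply cauchySeq_of_le_geometric ((2:ℝ) ^ (1 - β)) (R * t ^ β) hr1
  intro n
  rw [dist_eq_norm]
  calc ‖dyadicSum A n t - dyadicSum A (n+1) t‖ ≤ R * t ^ β * 2 ^ ((n : ℝ) * (1 - β)) := key n
    _ = R * t ^ β * ((2:ℝ) ^ (1 - β)) ^ n := by
        rw [← Real.rpow_natCast ((2:ℝ) ^ (1-β)) n, ← Real.rpow_mul (by norm_num), mul_comm (1-β)]
end

section
/- (Minty's trick in Hilbert space) Let H be a real Hilbert space and A : H → H a monotone operator (⟨A u - A v, u - v⟩ ≥ 0 for all u,v) that is hemicontinuous (for all u, v, w ∈ H, t ↦ ⟨A(u + t v), w⟩ is continuous on [0,1]). Suppose u_n ⇀ u weakly in H, A u_n ⇀ ξ weakly in H, and ⟨A u_n, u_n⟩ → ⟨ξ, u⟩. Then A u = ξ. -/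
open Filter Topology

theorem minty_trick
    {H : Type*} [NormedAddCommGroup H] [InnerProductSpace ℝ H] [CompleteSpace H]
    (A : H → H)
    (hmono : ∀ u v : H, (0:ℝ) ≤ inner ℝ (A u - A v) (u - v))
    (hhemi : ∀ u v w : H, ContinuousOn (fun t : ℝ => (inner ℝ (A (u + t • v)) w : ℝ)) (Set.Icc 0 1))
    (u ξ : H) (un : ℕ → H)
    (hweak_u : ∀ w : H, Tendsto (fun n => (inner ℝ (un n) w : ℝ)) atTop (𝓝 (inner ℝ u w)))
    (hweak_A : ∀ w : H, Tendsto (fun n => (inner ℝ (A (un n)) w : ℝ)) atTop (𝓝 (inner ℝ ξ w)))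
    (hpair : Tendsto (fun n => (inner ℝ (A (un n)) (un n) : ℝ)) atTop (𝓝 (inner ℝ ξ u))) :
    A u = ξ := by
  -- Step 1: for every v, ⟨ξ - A v, u - v⟩ ≥ 0
  have key : ∀ v : H, (0:ℝ) ≤ inner ℝ (ξ - A v) (u - v) := by
    intro v
    have hlim : Tendsto (fun n => (inner ℝ (A (un n) - A v) (un n - v) : ℝ)) atTop
        (𝓝 (inner ℝ (ξ - A v) (u - v))) := by
      have h1 : ∀ n, (inner ℝ (A (un n) - A v) (un n - v) : ℝ) =
          inner ℝ (A (un n)) (un n) - inner ℝ (A (un n)) v - inner ℝ (un n) (A v)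
            + inner ℝ (A v) v := by
        intro n
        rw [inner_sub_left, inner_sub_right, inner_sub_right,
          real_inner_comm (un n) (A v)]
        ring
      have h2 : (inner ℝ (ξ - A v) (u - v) : ℝ) =
          inner ℝ ξ u - inner ℝ ξ v - inner ℝ u (A v) + inner ℝ (A v) v := by
        rw [inner_sub_left, inner_sub_right, inner_sub_right,
          real_inner_comm u (A v)]
        ring
      simp only [h1, h2]
      exact (((hpair.sub (hweak_A v)).sub (hweak_u (A v))).add tendsto_const_nhds)
    exact ge_of_tendsto hlim (Eventually.of_forall fun n => hmono (un n) v)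
  -- Step 2: ⟨ξ - A u, w⟩ ≥ 0 for all w
  have key2 : ∀ w : H, (0:ℝ) ≤ inner ℝ (ξ - A u) w := by
    intro w
    set f : ℝ → ℝ := fun t => inner ℝ (ξ - A (u + t • (-w))) w with hf
    have hfc : ContinuousOn f (Set.Icc 0 1) := by
      have : f = fun t => (inner ℝ ξ w : ℝ) - inner ℝ (A (u + t • (-w))) w := by
        funext t; simp [hf, inner_sub_left]
      rw [this]
      exact continuousOn_const.sub (hhemi u (-w) w)
    have hnn : ∀ t ∈ Set.Ioc (0:ℝ) 1, 0 ≤ f t := by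
      intro t ht
      have h := key (u + t • (-w))
      have huv : u - (u + t • (-w)) = t • w := by
        simp [smul_neg]
      rw [huv, real_inner_smul_right] at h
      have := nonneg_of_mul_nonneg_right h ht.1
      simpa [hf] using this
    have hlim : Tendsto f (𝓝[Set.Ioc (0:ℝ) 1] 0) (𝓝 (f 0)) := by
      have h0 : ContinuousWithinAt f (Set.Icc 0 1) 0 :=
        hfc 0 (by constructor <;> norm_num)
      exact h0.tendsto.mono_left (nhdsWithin_mono _ Set.Ioc_subset_Icc_self)
    have hne : (𝓝[Set.Ioc (0:ℝ) 1] 0).NeBot := by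
      apply mem_closure_iff_nhdsWithin_neBot.mp
      have : (0:ℝ) ∈ closure (Set.Ioc (0:ℝ) 1) := by
        rw [closure_Ioc (by norm_num : (0:ℝ) ≠ 1)]
        constructor <;> norm_num
      exact this
    have : 0 ≤ f 0 :=
      ge_of_tendsto hlim (eventually_nhdsWithin_of_forall hnn)
    simpa [hf] using this
  have : ∀ w : H, (inner ℝ (ξ - A u) w : ℝ) = 0 := by
    intro w
    have h1 := key2 w
    have h2 := key2 (-w)
    rw [inner_neg_right] at h2
    linarith
  have : ξ - A u = 0 := by
    have := this (ξ - A u)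
    rwa [inner_self_eq_zero] at this
  rw [sub_eq_zero] at this
  exact this.symm
end

section
/- (Sewing limit exchange, simplified) Let E be a Banach space, 0 < α ≤ 1 < β, and let A, A^n be germs on [0,T] with values in E (A(t,t) = A^n(t,t) = 0) such that sup_n ‖δA^n‖_β ≤ R, ‖δA‖_β ≤ R, and ‖A^n - A‖_α → 0, where ‖B‖_α = sup_{s<t} ‖B(s,t)‖/|t-s|^α and ‖δB‖_β = sup_{s<u<t}‖B(s,t)-B(s,u)-B(u,t)‖/|t-s|^β. Then the sewings satisfy ‖ℐA^n - ℐA‖_{C^α([0,T];E)} → 0. -/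
open Filter Topology

set_option maxHeartbeats 2000000 in
theorem sewing_limit_exchange
    {E : Type*} [NormedAddCommGroup E] [NormedSpace ℝ E] [CompleteSpace E]
    (T : ℝ) (hT : 0 < T) (α β : ℝ) (hα₀ : 0 < α) (hα₁ : α ≤ 1) (hβ : 1 < β)
    (A : ℝ → ℝ → E) (An : ℕ → ℝ → ℝ → E)
    (hAdiag : ∀ t, A t t = 0) (hAndiag : ∀ n t, An n t t = 0)
    (R : ℝ) (hR : 0 ≤ R)
    -- uniform bound on δA and δAⁿ in the β-norm:
    (hδA : ∀ s u t : ℝ, 0 ≤ s → s ≤ u → u ≤ t → t ≤ T →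
      ‖A s t - A s u - A u t‖ ≤ R * (t - s) ^ β)
    (hδAn : ∀ n : ℕ, ∀ s u t : ℝ, 0 ≤ s → s ≤ u → u ≤ t → t ≤ T →
      ‖An n s t - An n s u - An n u t‖ ≤ R * (t - s) ^ β)
    -- convergence of the germs in the α-norm: ‖Aⁿ - A‖_α → 0
    (ε : ℕ → ℝ) (hε : Tendsto ε atTop (𝓝 0))
    (hconv : ∀ n : ℕ, ∀ s t : ℝ, 0 ≤ s → s ≤ t → t ≤ T →
      ‖An n s t - A s t‖ ≤ ε n * (t - s) ^ α)
    -- the sewings of A and of the Aⁿ, characterized by Gubinelli's Sewing Lemma: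
    (IA : ℝ → E) (IAn : ℕ → ℝ → E) (c : ℝ)
    (hIA0 : IA 0 = 0) (hIAn0 : ∀ n, IAn n 0 = 0)
    (hIA : ∀ s t : ℝ, 0 ≤ s → s ≤ t → t ≤ T →
      ‖IA t - IA s - A s t‖ ≤ c * R * (t - s) ^ β)
    (hIAn : ∀ n : ℕ, ∀ s t : ℝ, 0 ≤ s → s ≤ t → t ≤ T →
      ‖IAn n t - IAn n s - An n s t‖ ≤ c * R * (t - s) ^ β) :
    ∃ K : ℕ → ℝ, Tendsto K atTop (𝓝 0) ∧
      ∀ n : ℕ, ∀ s t : ℝ, 0 ≤ s → s ≤ t → t ≤ T →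
        ‖(IAn n t - IAn n s) - (IA t - IA s)‖ ≤ K n * (t - s) ^ α := by
  have hTα : 0 < T ^ α := Real.rpow_pos_of_pos hT α
  have hTβ : 0 < T ^ β := Real.rpow_pos_of_pos hT β
  have hε0 : ∀ n, 0 ≤ ε n := by
    intro n
    have h1 : (0:ℝ) ≤ ε n * T ^ α :=
      le_trans (norm_nonneg _) (by simpa using hconv n 0 T le_rfl hT.le le_rfl)
    nlinarith
  have hcR : 0 ≤ c * R := by
    have h1 : (0:ℝ) ≤ c * R * T ^ β :=
      le_trans (norm_nonneg _) (by simpa using hIA 0 T le_rfl hT.le le_rfl)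
    nlinarith
  -- an auxiliary positive sequence tending to 0, dominating ε
  set e : ℕ → ℝ := fun n => max (ε n) ((n:ℝ)+1)⁻¹ with he
  have hepos : ∀ n, 0 < e n := fun n => lt_max_of_lt_right (by positivity)
  have he0 : Tendsto e atTop (𝓝 0) := by
    have h2 : Tendsto (fun n : ℕ => ((n:ℝ)+1)⁻¹) atTop (𝓝 0) := by
      simpa [one_div] using tendsto_one_div_add_atTop_nhds_zero_nat (𝕜 := ℝ)
    simpa using hε.max h2
  have heε : ∀ n, ε n ≤ e n := fun n => le_max_left _ _
  -- number of subdivisions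
  set N : ℕ → ℕ := fun n => ⌈(e n) ^ (-(2:ℝ)⁻¹)⌉₊ with hNdef
  have hpow_pos : ∀ n, (0:ℝ) < (e n) ^ (-(2:ℝ)⁻¹) := fun n =>
    Real.rpow_pos_of_pos (hepos n) _
  have hN1 : ∀ n, 1 ≤ N n := fun n => Nat.one_le_ceil_iff.mpr (hpow_pos n)
  have hNpos : ∀ n, (0:ℝ) < (N n : ℝ) := fun n => by exact_mod_cast hN1 n
  have hNge : ∀ n, (e n) ^ (-(2:ℝ)⁻¹) ≤ (N n : ℝ) := fun n => Nat.le_ceil _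
  have hNle : ∀ n, (N n : ℝ) ≤ (e n) ^ (-(2:ℝ)⁻¹) + 1 := fun n =>
    (Nat.ceil_lt_add_one (hpow_pos n).le).le
  set K : ℕ → ℝ := fun n => 2 * (c*R) * T ^ (β - α) * (N n : ℝ) ^ (1 - β) + ε n * (N n : ℝ)
    with hKdef
  have hKnonneg : ∀ n, 0 ≤ K n := by
    intro n
    have := Real.rpow_nonneg (hNpos n).le (1 - β)
    have h2 := Real.rpow_nonneg hT.le (β - α)
    have := hε0 n
    have := (hNpos n).le
    positivity
  refine ⟨K, ?_, ?_⟩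
  · -- K tends to 0 by squeezing
    have hupper : ∀ n, K n ≤
        2 * (c*R) * T ^ (β - α) * (e n) ^ ((β-1)/2) + ((e n) ^ ((2:ℝ)⁻¹) + e n) := by
      intro n
      have h1 : (N n : ℝ) ^ (1 - β) ≤ ((e n) ^ (-(2:ℝ)⁻¹)) ^ (1 - β) :=
        Real.rpow_le_rpow_of_nonpos (hpow_pos n) (hNge n) (by linarith)
      have h1' : ((e n) ^ (-(2:ℝ)⁻¹)) ^ (1 - β) = (e n) ^ ((β-1)/2) := by
        rw [← Real.rpow_mul (hepos n).le]
        congr 1; ring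
      have h2 : ε n * (N n : ℝ) ≤ (e n) ^ ((2:ℝ)⁻¹) + e n := by
        have hmul : ε n * (N n : ℝ) ≤ e n * ((e n) ^ (-(2:ℝ)⁻¹) + 1) := by
          have := mul_le_mul (heε n) (hNle n) (hNpos n).le (hepos n).le
          exact le_trans (by nlinarith [hε0 n, hNpos n, hNle n, heε n, hepos n]) this
        have hee : e n * (e n) ^ (-(2:ℝ)⁻¹) = (e n) ^ ((2:ℝ)⁻¹) := by
          nth_rewrite 1 [← Real.rpow_one (e n)]
          rw [← Real.rpow_add (hepos n)]
          norm_num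
        calc ε n * (N n : ℝ) ≤ e n * ((e n) ^ (-(2:ℝ)⁻¹) + 1) := hmul
          _ = (e n) ^ ((2:ℝ)⁻¹) + e n := by rw [mul_add, hee, mul_one]
      have h3 : 2 * (c*R) * T ^ (β - α) * (N n : ℝ) ^ (1 - β)
          ≤ 2 * (c*R) * T ^ (β - α) * (e n) ^ ((β-1)/2) := by
        rw [← h1']
        have hnn : 0 ≤ 2 * (c*R) * T ^ (β - α) := by positivity
        exact mul_le_mul_of_nonneg_left h1 hnn
      simp only [hKdef]
      linarith
    have hp : ∀ p : ℝ, 0 < p → Tendsto (fun n => (e n) ^ p) atTop (𝓝 0) := by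
      intro p hp
      have hc : ContinuousAt (fun x : ℝ => x ^ p) 0 :=
        Real.continuousAt_rpow_const 0 p (Or.inr hp.le)
      have := hc.tendsto.comp he0
      simpa [Function.comp_def, Real.zero_rpow hp.ne'] using this
    have hU : Tendsto (fun n =>
        2 * (c*R) * T ^ (β - α) * (e n) ^ ((β-1)/2) + ((e n) ^ ((2:ℝ)⁻¹) + e n))
        atTop (𝓝 0) := by
      have t1 := (hp ((β-1)/2) (by linarith)).const_mul (2 * (c*R) * T ^ (β - α))
      have t2 := (hp (2:ℝ)⁻¹ (by norm_num)).add he0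
      simpa using t1.add t2
    exact squeeze_zero hKnonneg hupper hU
  · -- the main estimate
    intro n s t hs hst htT
    rcases eq_or_lt_of_le hst with rfl | hlt
    · simp [Real.zero_rpow (ne_of_gt hα₀)]
    have hts : 0 < t - s := by linarith
    set Nn := N n with hNn
    have hNnpos : (0:ℝ) < (Nn:ℝ) := hNpos n
    set h := (t - s) / (Nn:ℝ) with hh
    have hh0 : 0 ≤ h := div_nonneg hts.le hNnpos.le
    have hNh : (Nn:ℝ) * h = t - s := by
      rw [hh]; field_simp [hNnpos.ne']
    -- telescoping
    set F : ℝ → E := fun x => IAn n x - IA x with hF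
    have hNh' : s + (Nn:ℝ)*h = t := by rw [hNh]; ring
    have tele : F t - F s = ∑ i ∈ Finset.range Nn,
        (F (s + (((i+1:ℕ)):ℝ)*h) - F (s + (i:ℝ)*h)) := by
      rw [Finset.sum_range_sub (fun i : ℕ => F (s + (i:ℝ)*h)) Nn]
      norm_num [hNh']
    have term_bound : ∀ i ∈ Finset.range Nn,
        ‖F (s + (((i+1:ℕ)):ℝ)*h) - F (s + (i:ℝ)*h)‖ ≤ 2*(c*R) * h ^ β + ε n * h ^ α := by
      intro i hi
      rw [Finset.mem_range] at hi
      set a := s + (i:ℝ)*h with ha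
      set b := s + (((i+1:ℕ)):ℝ)*h with hb
      have hb' : b = s + ((i:ℝ)+1)*h := by rw [hb]; push_cast; ring
      have hba : b - a = h := by rw [ha, hb']; ring
      have ha0 : 0 ≤ a := by
        have : 0 ≤ (i:ℝ)*h := mul_nonneg (Nat.cast_nonneg i) hh0
        linarith
      have hab : a ≤ b := by rw [ha, hb']; nlinarith
      have hbT : b ≤ T := by
        have hi' : (i:ℝ) + 1 ≤ (Nn:ℝ) := by exact_mod_cast hi
        have : ((i:ℝ)+1)*h ≤ (Nn:ℝ)*h := by nlinarith
        rw [hb']; rw [hNh] at this; linarith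
      have e1 := hIAn n a b ha0 hab hbT
      have e2 := hIA a b ha0 hab hbT
      have e3 := hconv n a b ha0 hab hbT
      rw [hba] at e1 e2 e3
      have : F b - F a = (IAn n b - IAn n a - An n a b) - (IA b - IA a - A a b)
          + (An n a b - A a b) := by
        simp only [hF]; abel
      rw [this]
      calc ‖(IAn n b - IAn n a - An n a b) - (IA b - IA a - A a b) + (An n a b - A a b)‖
          ≤ ‖(IAn n b - IAn n a - An n a b) - (IA b - IA a - A a b)‖ + ‖An n a b - A a b‖ :=
            norm_add_le _ _
        _ ≤ ‖IAn n b - IAn n a - An n a b‖ + ‖IA b - IA a - A a b‖ + ‖An n a b - A a b‖ := by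
            have := norm_sub_le (IAn n b - IAn n a - An n a b) (IA b - IA a - A a b)
            linarith
        _ ≤ c*R*h^β + c*R*h^β + ε n * h^α := by linarith
        _ = 2*(c*R) * h ^ β + ε n * h ^ α := by ring
    have sum_bound : ‖F t - F s‖ ≤ (Nn:ℝ) * (2*(c*R) * h ^ β + ε n * h ^ α) := by
      rw [tele]
      calc ‖∑ i ∈ Finset.range Nn, (F (s + (((i+1:ℕ)):ℝ)*h) - F (s + (i:ℝ)*h))‖
          ≤ ∑ i ∈ Finset.range Nn, ‖F (s + (((i+1:ℕ)):ℝ)*h) - F (s + (i:ℝ)*h)‖ :=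
            norm_sum_le _ _
        _ ≤ ∑ _i ∈ Finset.range Nn, (2*(c*R) * h ^ β + ε n * h ^ α) :=
            Finset.sum_le_sum term_bound
        _ = (Nn:ℝ) * (2*(c*R) * h ^ β + ε n * h ^ α) := by
            rw [Finset.sum_const, Finset.card_range, nsmul_eq_mul]
    -- algebraic simplification
    have hhβ : h ^ β = (t-s)^β / (Nn:ℝ)^β := Real.div_rpow hts.le hNnpos.le β
    have hhα : h ^ α = (t-s)^α / (Nn:ℝ)^α := Real.div_rpow hts.le hNnpos.le α
    have hNβ : (Nn:ℝ) / (Nn:ℝ)^β = (Nn:ℝ)^(1-β) := by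
      rw [Real.rpow_sub hNnpos, Real.rpow_one]
    have hNα : (Nn:ℝ) / (Nn:ℝ)^α = (Nn:ℝ)^(1-α) := by
      rw [Real.rpow_sub hNnpos, Real.rpow_one]
    have key : ‖F t - F s‖ ≤
        2*(c*R) * (t-s)^β * (Nn:ℝ)^(1-β) + ε n * (t-s)^α * (Nn:ℝ)^(1-α) := by
      calc ‖F t - F s‖ ≤ (Nn:ℝ) * (2*(c*R) * h ^ β + ε n * h ^ α) := sum_bound
        _ = 2*(c*R) * (t-s)^β * ((Nn:ℝ) / (Nn:ℝ)^β)
            + ε n * (t-s)^α * ((Nn:ℝ) / (Nn:ℝ)^α) := by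
            rw [hhβ, hhα]; ring
        _ = _ := by rw [hNβ, hNα]
    -- (t-s)^β ≤ T^(β-α) * (t-s)^α
    have hsplit : (t-s)^β = (t-s)^(β-α) * (t-s)^α := by
      rw [← Real.rpow_add hts]; ring_nf
    have hTdom : (t-s)^(β-α) ≤ T^(β-α) :=
      Real.rpow_le_rpow hts.le (by linarith) (by linarith)
    have hNαle : (Nn:ℝ)^(1-α) ≤ (Nn:ℝ) := by
      nth_rewrite 2 [← Real.rpow_one (Nn:ℝ)]
      exact Real.rpow_le_rpow_of_exponent_le (by exact_mod_cast hN1 n) (by linarith)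
    have htsα : 0 ≤ (t-s)^α := Real.rpow_nonneg hts.le α
    have hNβnn : 0 ≤ (Nn:ℝ)^(1-β) := Real.rpow_nonneg hNnpos.le _
    have final : 2*(c*R) * (t-s)^β * (Nn:ℝ)^(1-β) + ε n * (t-s)^α * (Nn:ℝ)^(1-α)
        ≤ K n * (t-s)^α := by
      have hcR2 : (0:ℝ) ≤ 2*(c*R) := by linarith
      have h1 : 2*(c*R) * (t-s)^β * (Nn:ℝ)^(1-β)
          ≤ 2*(c*R) * T^(β-α) * (Nn:ℝ)^(1-β) * (t-s)^α := by
        rw [hsplit]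
        calc 2*(c*R) * ((t-s)^(β-α) * (t-s)^α) * (Nn:ℝ)^(1-β)
            = (2*(c*R) * (t-s)^(β-α)) * ((Nn:ℝ)^(1-β) * (t-s)^α) := by ring
          _ ≤ (2*(c*R) * T^(β-α)) * ((Nn:ℝ)^(1-β) * (t-s)^α) :=
              mul_le_mul_of_nonneg_right (mul_le_mul_of_nonneg_left hTdom hcR2)
                (mul_nonneg hNβnn htsα)
          _ = 2*(c*R) * T^(β-α) * (Nn:ℝ)^(1-β) * (t-s)^α := by ring
      have h2 : ε n * (t-s)^α * (Nn:ℝ)^(1-α) ≤ ε n * (Nn:ℝ) * (t-s)^α := by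
        calc ε n * (t-s)^α * (Nn:ℝ)^(1-α)
            = (ε n * (Nn:ℝ)^(1-α)) * (t-s)^α := by ring
          _ ≤ (ε n * (Nn:ℝ)) * (t-s)^α :=
              mul_le_mul_of_nonneg_right (mul_le_mul_of_nonneg_left hNαle (hε0 n)) htsα
          _ = ε n * (Nn:ℝ) * (t-s)^α := by ring
      have hKn : K n = 2 * (c*R) * T ^ (β - α) * (Nn : ℝ) ^ (1 - β) + ε n * (Nn : ℝ) := by
        simp only [hKdef, hNn]
      rw [hKn, add_mul]
      linarith
    have hrw : (IAn n t - IAn n s) - (IA t - IA s) = F t - F s := by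
      simp only [hF]; abel
    rw [hrw]
    exact key.trans final
end
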